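/- For a partial order P on [n], the Euclidean volume of the order polytope O(P) equals e(P)/n!, where e(P) is the number of linear extensions of P. -/

import Mathlib

open MeasureTheory

/-- The order polytope of a partial order `P` on `Fin n`. -/
def orderPolytope (n : ℕ) (P : PartialOrder (Fin n)) : Set (Fin n → ℝ) :=
  {x | (∀ i, 0 ≤ x i ∧ x i ≤ 1) ∧ ∀ j k, P.le j k → x j ≤ x k}

/-- The chain polytope of a partial order `P` on `Fin n`. -/
def chainPolytope (n : ℕ) (P : PartialOrder (Fin n)) : Set (Fin n → ℝ) :=
  {x | (∀ i, 0 ≤ x i) ∧ ∀ C : Finset (Fin n), IsChain P.le ↑C → ∑ i ∈ C, x i ≤ 1}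

/-- The number of linear extensions of a partial order `P` on `Fin n`. -/
noncomputable def numLinExtOrder (n : ℕ) (P : PartialOrder (Fin n)) : ℕ :=
  Nat.card {f : Fin n ≃ Fin n // ∀ j k, P.lt j k → f j < f k}

/- ### Auxiliary development -/

/-- The simplex of points of the cube whose coordinates are ordered according to `σ`. -/
def simplexOf {n : ℕ} (σ : Equiv.Perm (Fin n)) : Set (Fin n → ℝ) :=
  {x | (∀ i, 0 ≤ x i ∧ x i ≤ 1) ∧ ∀ i j, σ i ≤ σ j → x i ≤ x j}

lemma measurableSet_simplexOf {n : ℕ} (σ : Equiv.Perm (Fin n)) :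
    MeasurableSet (simplexOf σ) := by
  have h : simplexOf σ =
      (⋂ i, ({x : Fin n → ℝ | 0 ≤ x i} ∩ {x | x i ≤ 1})) ∩
        ⋂ i, ⋂ j, ⋂ (_ : σ i ≤ σ j), {x : Fin n → ℝ | x i ≤ x j} := by
    ext x
    simp only [simplexOf, Set.mem_setOf_eq, Set.mem_inter_iff, Set.mem_iInter,
      Set.mem_inter_iff, Set.mem_setOf_eq]
  rw [h]
  refine MeasurableSet.inter ?_ ?_
  · exact MeasurableSet.iInter fun i =>
      ((measurableSet_le measurable_const (measurable_pi_apply i)).inter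
        (measurableSet_le (measurable_pi_apply i) measurable_const))
  · exact MeasurableSet.iInter fun i => MeasurableSet.iInter fun j =>
      MeasurableSet.iInter fun _ =>
        measurableSet_le (measurable_pi_apply i) (measurable_pi_apply j)

lemma diag_null {n : ℕ} {i j : Fin n} (h : i ≠ j) :
    volume {x : Fin n → ℝ | x i = x j} = 0 := by
  have heq : {x : Fin n → ℝ | x i = x j} =
      (LinearMap.ker ((LinearMap.proj i : (Fin n → ℝ) →ₗ[ℝ] ℝ) - LinearMap.proj j) :
        Submodule ℝ (Fin n → ℝ)) := by
    ext x
    simp [LinearMap.mem_ker, sub_eq_zero]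
  rw [heq]
  apply Measure.addHaar_submodule
  intro htop
  have hmem : (Pi.single i 1 : Fin n → ℝ) ∈
      LinearMap.ker ((LinearMap.proj i : (Fin n → ℝ) →ₗ[ℝ] ℝ) - LinearMap.proj j) := by
    rw [htop]; trivial
  simp only [LinearMap.mem_ker, LinearMap.sub_apply, LinearMap.proj_apply] at hmem
  rw [Pi.single_eq_same, Pi.single_eq_of_ne (Ne.symm h)] at hmem
  norm_num at hmem

/-- The "bad set" of points with two equal coordinates. -/
def badSet (n : ℕ) : Set (Fin n → ℝ) :=
  ⋃ i, ⋃ j, ⋃ (_ : i ≠ j), {x : Fin n → ℝ | x i = x j}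

lemma badSet_null (n : ℕ) : volume (badSet n) = 0 := by
  refine measure_iUnion_null fun i => measure_iUnion_null fun j => measure_iUnion_null fun h => ?_
  exact diag_null h

lemma perm_eq_of_strictMono {n : ℕ} {σ τ : Equiv.Perm (Fin n)}
    (h : ∀ a b, σ a < σ b → τ a < τ b) : σ = τ := by
  set g : Equiv.Perm (Fin n) := σ.symm.trans τ with hgdef
  have hg : StrictMono ⇑g := by
    intro u v huv
    have := h (σ.symm u) (σ.symm v) (by simpa using huv)
    simpa [hgdef] using this
  have hwf : WellFoundedLT (Fin n) := inferInstance
  have hid : ∀ u, g u = u := by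
    intro u
    have h1 : u ≤ g u := hg.le_apply
    have h2 : StrictMono ⇑g.symm := by
      intro a b hab
      have : g (g.symm a) < g (g.symm b) := by simpa using hab
      exact hg.lt_iff_lt.mp this
    have h3 : g u ≤ u := by
      have := h2.le_apply (x := g u)
      have h4 : g (g u) ≤ g (g.symm (g u)) := hg.monotone this
      simpa using hg.le_iff_le.mp h4
    exact le_antisymm h3 h1
  apply Equiv.ext
  intro a
  have h5 : τ a = σ a := by simpa [hgdef] using hid (σ a)
  exact h5.symm

lemma simplex_inter_subset_bad {n : ℕ} {σ τ : Equiv.Perm (Fin n)} (h : σ ≠ τ) :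
    simplexOf σ ∩ simplexOf τ ⊆ badSet n := by
  have hex : ∃ a b, σ a < σ b ∧ τ b ≤ τ a := by
    by_contra hc
    push_neg at hc
    exact h (perm_eq_of_strictMono hc)
  obtain ⟨a, b, hab1, hab2⟩ := hex
  intro x ⟨hxσ, hxτ⟩
  have h1 : x a ≤ x b := hxσ.2 a b hab1.le
  have h2 : x b ≤ x a := hxτ.2 b a hab2
  have hne : a ≠ b := fun hab => by simp [hab] at hab1
  refine Set.mem_iUnion.mpr ⟨a, Set.mem_iUnion.mpr ⟨b, Set.mem_iUnion.mpr ⟨hne, ?_⟩⟩⟩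
  exact le_antisymm h1 h2

lemma aedisjoint_simplexOf {n : ℕ} {σ τ : Equiv.Perm (Fin n)} (h : σ ≠ τ) :
    AEDisjoint volume (simplexOf σ) (simplexOf τ) :=
  measure_mono_null (simplex_inter_subset_bad h) (badSet_null n)

/-- Every point of the cube belongs to the simplex of the inverse of its sorting
permutation. -/
lemma mem_simplexOf_sort {n : ℕ} (x : Fin n → ℝ) (hx : ∀ i, 0 ≤ x i ∧ x i ≤ 1) :
    x ∈ simplexOf (Tuple.sort x)⁻¹ := by
  refine ⟨hx, fun i j hij => ?_⟩
  have := Tuple.monotone_sort x hij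
  simpa using this

/-- Every simplex has the same volume as the one of the identity permutation. -/
lemma volume_simplexOf {n : ℕ} (σ : Equiv.Perm (Fin n)) :
    volume (simplexOf σ) = volume (simplexOf (1 : Equiv.Perm (Fin n))) := by
  set T := MeasurableEquiv.piCongrLeft (fun _ : Fin n => ℝ) σ with hT
  have hTapp : ∀ (x : Fin n → ℝ) (b : Fin n), T x b = x (σ.symm b) := by
    intro x b
    rw [hT, MeasurableEquiv.coe_piCongrLeft]
    conv_lhs => rw [← σ.apply_symm_apply b]
    rw [Equiv.piCongrLeft_apply_apply]
  have hpre : simplexOf σ = T ⁻¹' (simplexOf (1 : Equiv.Perm (Fin n))) := by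
    ext x
    simp only [Set.mem_preimage, simplexOf, Set.mem_setOf_eq, Equiv.Perm.one_apply]
    constructor
    · rintro ⟨h1, h2⟩
      refine ⟨fun i => by rw [hTapp]; exact h1 _, fun i j hij => ?_⟩
      rw [hTapp, hTapp]
      exact h2 _ _ (by simpa using hij)
    · rintro ⟨h1, h2⟩
      constructor
      · intro i
        have := h1 (σ i)
        rwa [hTapp, σ.symm_apply_apply] at this
      · intro i j hij
        have := h2 (σ i) (σ j) hij
        rwa [hTapp, hTapp, σ.symm_apply_apply, σ.symm_apply_apply] at this
  rw [hpre]
  exact (volume_measurePreserving_piCongrLeft (fun _ : Fin n => ℝ) σ).measure_preimage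
    (measurableSet_simplexOf 1).nullMeasurableSet

lemma simplexOf_subset_cube {n : ℕ} (σ : Equiv.Perm (Fin n)) :
    simplexOf σ ⊆ {x : Fin n → ℝ | ∀ i, 0 ≤ x i ∧ x i ≤ 1} := fun _ hx => hx.1

/-- The volume of the unit simplex is `1 / n!`. -/
lemma volume_simplexOf_one (n : ℕ) :
    volume (simplexOf (1 : Equiv.Perm (Fin n))) = 1 / (Nat.factorial n : ENNReal) := by
  classical
  set v := volume (simplexOf (1 : Equiv.Perm (Fin n))) with hv
  have hcube : {x : Fin n → ℝ | ∀ i, 0 ≤ x i ∧ x i ≤ 1} =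
      ⋃ σ : Equiv.Perm (Fin n), simplexOf σ := by
    apply Set.Subset.antisymm
    · intro x hx
      exact Set.mem_iUnion.mpr ⟨(Tuple.sort x)⁻¹, mem_simplexOf_sort x hx⟩
    · exact Set.iUnion_subset fun σ => simplexOf_subset_cube σ
  have hcubevol : volume {x : Fin n → ℝ | ∀ i, 0 ≤ x i ∧ x i ≤ 1} = 1 := by
    have : {x : Fin n → ℝ | ∀ i, 0 ≤ x i ∧ x i ≤ 1} =
        Set.pi Set.univ (fun _ : Fin n => Set.Icc (0 : ℝ) 1) := by
      ext x; simp [Set.mem_pi, Set.mem_Icc, Pi.le_def, forall_and]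
    rw [this, volume_pi_pi]
    simp [Real.volume_Icc]
  have hsum : volume (⋃ σ : Equiv.Perm (Fin n), simplexOf σ) =
      ∑' σ : Equiv.Perm (Fin n), volume (simplexOf σ) := by
    refine measure_iUnion₀ (fun σ τ hστ => aedisjoint_simplexOf hστ)
      (fun σ => (measurableSet_simplexOf σ).nullMeasurableSet)
  have hconst : ∑' σ : Equiv.Perm (Fin n), volume (simplexOf σ) =
      (Nat.factorial n : ENNReal) * v := by
    rw [tsum_fintype]
    have : ∀ σ : Equiv.Perm (Fin n), volume (simplexOf σ) = v := fun σ => volume_simplexOf σ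
    rw [Finset.sum_congr rfl fun σ _ => this σ, Finset.sum_const, Finset.card_univ,
      Fintype.card_perm, Fintype.card_fin, nsmul_eq_mul]
  have hkey : (Nat.factorial n : ENNReal) * v = 1 := by
    rw [← hconst, ← hsum, ← hcube, hcubevol]
  have hfac0 : (Nat.factorial n : ENNReal) ≠ 0 := by
    exact_mod_cast Nat.cast_ne_zero.mpr (Nat.factorial_ne_zero n)
  have hfactop : (Nat.factorial n : ENNReal) ≠ ⊤ := ENNReal.natCast_ne_top _
  rw [(ENNReal.eq_div_iff hfac0 hfactop)]
  exact hkey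

theorem stmt_5 (n : ℕ) (P : PartialOrder (Fin n)) :
    volume (orderPolytope n P) = (numLinExtOrder n P : ENNReal) / (Nat.factorial n : ENNReal) := by
  classical
  set p : Equiv.Perm (Fin n) → Prop := fun σ => ∀ j k, P.lt j k → σ j < σ k with hp
  have hlt_le : ∀ j k, P.lt j k → P.le j k := fun j k h => (P.lt_iff_le_not_ge j k).mp h |>.1
  have hlt_ne : ∀ j k, P.lt j k → j ≠ k := by
    intro j k h heq
    rw [heq] at h
    have := (P.lt_iff_le_not_ge k k).mp h
    exact this.2 this.1
  -- the union of simplices of linear extensions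
  set U : Set (Fin n → ℝ) := ⋃ σ : {σ : Equiv.Perm (Fin n) // p σ}, simplexOf σ.1 with hU
  have hsub1 : U ⊆ orderPolytope n P := by
    rintro x hx
    obtain ⟨σ', hxσ⟩ := Set.mem_iUnion.mp hx
    refine ⟨hxσ.1, fun j k hjk => ?_⟩
    by_cases hkj : P.le k j
    · rw [P.le_antisymm j k hjk hkj]
    · have hlt : P.lt j k := (P.lt_iff_le_not_ge j k).mpr ⟨hjk, hkj⟩
      have hlt' : σ'.1 j < σ'.1 k := σ'.2 j k hlt
      exact hxσ.2 j k (by omega)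
  have hsub2 : orderPolytope n P ⊆ U ∪ badSet n := by
    intro x hx
    by_cases hbad : x ∈ badSet n
    · exact Or.inr hbad
    · left
      have hdistinct : ∀ i j : Fin n, i ≠ j → x i ≠ x j := by
        intro i j hij heq
        exact hbad (Set.mem_iUnion.mpr ⟨i, Set.mem_iUnion.mpr ⟨j, Set.mem_iUnion.mpr ⟨hij, heq⟩⟩⟩)
      set σ := (Tuple.sort x)⁻¹ with hσdef
      have hxσ : x ∈ simplexOf σ := mem_simplexOf_sort x hx.1
      have hpσ : p σ := by
        intro j k hjk
        have hxjk : x j < x k :=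
          lt_of_le_of_ne (hx.2 j k (hlt_le j k hjk)) (hdistinct j k (hlt_ne j k hjk))
        by_contra hle
        push_neg at hle
        exact absurd (hxσ.2 k j hle) (not_le.mpr hxjk)
      exact Set.mem_iUnion.mpr ⟨⟨σ, hpσ⟩, hxσ⟩
  have hUvol : volume U = (Nat.card {σ : Equiv.Perm (Fin n) // p σ} : ENNReal) *
      (1 / (Nat.factorial n : ENNReal)) := by
    rw [hU, measure_iUnion₀ (fun σ τ hστ => aedisjoint_simplexOf
      (fun h => hστ (Subtype.ext h)))
      (fun σ => (measurableSet_simplexOf σ.1).nullMeasurableSet)]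
    rw [tsum_fintype]
    have : ∀ σ : {σ : Equiv.Perm (Fin n) // p σ}, volume (simplexOf σ.1) =
        1 / (Nat.factorial n : ENNReal) := fun σ => by
      rw [volume_simplexOf σ.1, volume_simplexOf_one]
    rw [Finset.sum_congr rfl fun σ _ => this σ, Finset.sum_const, Finset.card_univ,
      nsmul_eq_mul, Nat.card_eq_fintype_card]
  have h1 : volume (orderPolytope n P) ≤ volume U := by
    calc volume (orderPolytope n P) ≤ volume (U ∪ badSet n) := measure_mono hsub2
      _ ≤ volume U + volume (badSet n) := measure_union_le _ _
      _ = volume U := by rw [badSet_null n, add_zero]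
  have h2 : volume U ≤ volume (orderPolytope n P) := measure_mono hsub1
  have heq : volume (orderPolytope n P) = volume U := le_antisymm h1 h2
  rw [heq, hUvol]
  have : numLinExtOrder n P = Nat.card {σ : Equiv.Perm (Fin n) // p σ} := rfl
  rw [this, one_div, div_eq_mul_inv]
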